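/- For all real numbers a ∈ (0,1] and δ ≥ 0 with a − δ ≥ −1, one has (a − δ)·ln|a − δ| − a·ln a ≤ δ·(1 − ln a), where by convention t·ln|t| = 0 at t = 0. -/
import Mathlib


/-- For `a ∈ (0,1]`, `δ ≥ 0` with `a − δ ≥ −1`:
`(a − δ) ln|a − δ| − a ln a ≤ δ (1 − ln a)`. -/
theorem stmt_1 (a δ : ℝ) (ha : 0 < a) (ha1 : a ≤ 1) (hδ : 0 ≤ δ) (h : -1 ≤ a - δ) :
    (a - δ) * Real.log |a - δ| - a * Real.log a ≤ δ * (1 - Real.log a) := by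
  set t := a - δ with ht
  have key : t * Real.log |t| ≤ a - t + t * Real.log a := by
    rcases lt_trichotomy t 0 with hlt | heq | hgt
    · have habs : |t| = -t := abs_of_neg hlt
      rw [habs]
      have hpos : 0 < a / (-t) := div_pos ha (by linarith)
      have hlog := Real.log_le_sub_one_of_pos hpos
      rw [Real.log_div (ne_of_gt ha) (by linarith)] at hlog
      have h2 : (-t) * (Real.log a - Real.log (-t)) ≤ (-t) * (a / (-t) - 1) :=
        mul_le_mul_of_nonneg_left hlog (by linarith)
      have h3 : (-t) * (a / (-t) - 1) = a + t := by
        have hne : (-t) ≠ 0 := by intro hc; rw [neg_eq_zero] at hc; exact absurd hc (ne_of_lt hlt)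
        rw [mul_sub, mul_div_cancel₀ a hne]
        ring
      nlinarith
    · rw [heq]; simp; linarith
    · have habs : |t| = t := abs_of_pos hgt
      rw [habs]
      have hpos : 0 < t / a := div_pos hgt ha
      have hlog := Real.log_le_sub_one_of_pos hpos
      rw [Real.log_div (ne_of_gt hgt) (ne_of_gt ha)] at hlog
      have h2 : t * (Real.log t - Real.log a) ≤ t * (t / a - 1) :=
        mul_le_mul_of_nonneg_left hlog hgt.le
      have h3 : t * (t / a) ≤ a := by
        rw [← mul_div_assoc, div_le_iff₀ ha]
        nlinarith
      nlinarith
  have hδt : δ = a - t := by rw [ht]; ring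
  have hm : δ * Real.log a = a * Real.log a - t * Real.log a := by rw [hδt]; ring
  linarith [key, hm]
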